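/- arXiv:2007.03998 — 2 statements merged into one kernel-verified Lean document; each statement's English description precedes it below -/
import Mathlib

section
/- Let N be an odd squarefree integer with ω(N) = 7 such that the smallest prime factor of N is at least 5 or the largest prime factor of N is greater than 73. Then (10/(3π)) · ( ∏_{p prime, p ∣ N} (2 + p^{3/4})/(1 + p) + 3 · ∏_{p prime, p ∣ N} (2 + p^{1/2})/(1 + p) ) < 1/12. -/
open Finset

private lemma list7 {α : Type*} (l : List α) (h : l.length = 7) :
    ∃ a b c d e f g, l = [a, b, c, d, e, f, g] := by
  rcases l with _ | ⟨a, l⟩; · simp at h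
  rcases l with _ | ⟨b, l⟩; · simp at h
  rcases l with _ | ⟨c, l⟩; · simp at h
  rcases l with _ | ⟨d, l⟩; · simp at h
  rcases l with _ | ⟨e, l⟩; · simp at h
  rcases l with _ | ⟨f, l⟩; · simp at h
  rcases l with _ | ⟨g, l⟩; · simp at h
  rcases l with _ | ⟨x, l⟩
  · exact ⟨a, b, c, d, e, f, g, rfl⟩
  · simp at h

private lemma rpow34_le (p c : ℝ) (hp : 1 ≤ p) (hc : 0 < c) (h : 1 ≤ c ^ 4 * p) :
    p ^ ((3 : ℝ) / 4) ≤ c * p := by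
  have hp0 : (0 : ℝ) ≤ p := by linarith
  have h1 : (p ^ ((3 : ℝ) / 4)) ^ (4 : ℕ) = p ^ (3 : ℕ) := by
    rw [← Real.rpow_natCast (p ^ ((3 : ℝ) / 4)) 4, ← Real.rpow_mul hp0,
      ← Real.rpow_natCast p 3]
    norm_num
  have h2 : (c * p) ^ (4 : ℕ) = c ^ 4 * p * p ^ (3 : ℕ) := by ring
  have h3 : (p ^ ((3 : ℝ) / 4)) ^ (4 : ℕ) ≤ (c * p) ^ (4 : ℕ) := by
    rw [h1, h2]
    nlinarith [pow_nonneg hp0 3, pow_pos (lt_of_lt_of_le one_pos hp) 3]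
  exact le_of_pow_le_pow_left₀ (by norm_num) (by positivity) h3

private lemma rpow12_le (p c : ℝ) (hp : 1 ≤ p) (hc : 0 < c) (h : 1 ≤ c ^ 2 * p) :
    p ^ ((1 : ℝ) / 2) ≤ c * p := by
  have hp0 : (0 : ℝ) ≤ p := by linarith
  have h1 : (p ^ ((1 : ℝ) / 2)) ^ (2 : ℕ) = p ^ (1 : ℕ) := by
    rw [← Real.rpow_natCast (p ^ ((1 : ℝ) / 2)) 2, ← Real.rpow_mul hp0,
      ← Real.rpow_natCast p 1]
    norm_num
  have h2 : (c * p) ^ (2 : ℕ) = c ^ 2 * p * p ^ (1 : ℕ) := by ring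
  have h3 : (p ^ ((1 : ℝ) / 2)) ^ (2 : ℕ) ≤ (c * p) ^ (2 : ℕ) := by
    rw [h1, h2]
    nlinarith [pow_nonneg hp0 1, hp]
  exact le_of_pow_le_pow_left₀ (by norm_num) (by positivity) h3

private lemma F_bound (p q : ℕ) (c r : ℝ) (hq : q ≤ p) (hq1 : 1 ≤ q) (hc : 0 < c)
    (hcq : 1 ≤ c ^ 4 * (q : ℝ)) (hcr : c < r) (h2 : 2 - r ≤ (r - c) * (q : ℝ)) :
    (2 + (p : ℝ) ^ ((3 : ℝ) / 4)) / (1 + (p : ℝ)) ≤ r := by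
  have hqp : (q : ℝ) ≤ (p : ℝ) := Nat.cast_le.mpr hq
  have hq1' : (1 : ℝ) ≤ (q : ℝ) := by exact_mod_cast hq1
  have hp1 : (1 : ℝ) ≤ (p : ℝ) := le_trans hq1' hqp
  have h34 : (p : ℝ) ^ ((3 : ℝ) / 4) ≤ c * p :=
    rpow34_le _ _ hp1 hc (by nlinarith [pow_nonneg hc.le 4])
  rw [div_le_iff₀ (by linarith)]
  have key : (r - c) * (q : ℝ) ≤ (r - c) * (p : ℝ) :=
    mul_le_mul_of_nonneg_left hqp (by linarith)
  nlinarith [h34, key, h2]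

private lemma G_bound (p q : ℕ) (c r : ℝ) (hq : q ≤ p) (hq1 : 1 ≤ q) (hc : 0 < c)
    (hcq : 1 ≤ c ^ 2 * (q : ℝ)) (hcr : c < r) (h2 : 2 - r ≤ (r - c) * (q : ℝ)) :
    (2 + (p : ℝ) ^ ((1 : ℝ) / 2)) / (1 + (p : ℝ)) ≤ r := by
  have hqp : (q : ℝ) ≤ (p : ℝ) := Nat.cast_le.mpr hq
  have hq1' : (1 : ℝ) ≤ (q : ℝ) := by exact_mod_cast hq1
  have hp1 : (1 : ℝ) ≤ (p : ℝ) := le_trans hq1' hqp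
  have h12 : (p : ℝ) ^ ((1 : ℝ) / 2) ≤ c * p :=
    rpow12_le _ _ hp1 hc (by nlinarith [pow_nonneg hc.le 2])
  rw [div_le_iff₀ (by linarith)]
  have key : (r - c) * (q : ℝ) ≤ (r - c) * (p : ℝ) :=
    mul_le_mul_of_nonneg_left hqp (by linarith)
  nlinarith [h12, key, h2]

private lemma prime_ge_5 {p : ℕ} (hp : p.Prime) (h : 3 < p) : 5 ≤ p := by
  by_contra h'; push_neg at h'; interval_cases p <;> exact absurd hp (by decide)

private lemma prime_ge_7 {p : ℕ} (hp : p.Prime) (h : 5 < p) : 7 ≤ p := by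
  by_contra h'; push_neg at h'; interval_cases p <;> exact absurd hp (by decide)

private lemma prime_ge_11 {p : ℕ} (hp : p.Prime) (h : 7 < p) : 11 ≤ p := by
  by_contra h'; push_neg at h'; interval_cases p <;> exact absurd hp (by decide)

private lemma prime_ge_13 {p : ℕ} (hp : p.Prime) (h : 11 < p) : 13 ≤ p := by
  by_contra h'; push_neg at h'; interval_cases p <;> exact absurd hp (by decide)

private lemma prime_ge_17 {p : ℕ} (hp : p.Prime) (h : 13 < p) : 17 ≤ p := by
  by_contra h'; push_neg at h'; interval_cases p <;> exact absurd hp (by decide)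

private lemma prime_ge_19 {p : ℕ} (hp : p.Prime) (h : 17 < p) : 19 ≤ p := by
  by_contra h'; push_neg at h'; interval_cases p <;> exact absurd hp (by decide)

private lemma prime_ge_23 {p : ℕ} (hp : p.Prime) (h : 19 < p) : 23 ≤ p := by
  by_contra h'; push_neg at h'; interval_cases p <;> exact absurd hp (by decide)

private lemma prime_ge_79 {p : ℕ} (hp : p.Prime) (h : 73 < p) : 79 ≤ p := by
  by_contra h'; push_neg at h'; interval_cases p <;> exact absurd hp (by decide)

private lemma prod_seven (F : ℕ → ℝ) (a b c d e f g : ℕ) (hab : a < b) (hbc : b < c)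
    (hcd : c < d) (hde : d < e) (hef : e < f) (hfg : f < g) :
    ∏ p ∈ ({a, b, c, d, e, f, g} : Finset ℕ), F p =
      F a * (F b * (F c * (F d * (F e * (F f * F g))))) := by
  rw [Finset.prod_insert (by simp [Finset.mem_insert]; omega),
    Finset.prod_insert (by simp [Finset.mem_insert]; omega),
    Finset.prod_insert (by simp [Finset.mem_insert]; omega),
    Finset.prod_insert (by simp [Finset.mem_insert]; omega),
    Finset.prod_insert (by simp [Finset.mem_insert]; omega),
    Finset.prod_insert (by simp [Finset.mem_insert]; omega),
    Finset.prod_singleton]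

/-- For an odd squarefree integer `N` with exactly `7` distinct prime factors whose smallest
prime factor is at least `5` or whose largest prime factor is greater than `73`, the key
inequality holds. -/
theorem key_inequality_omega_eq_7 (N : ℕ) (hodd : Odd N) (hsf : Squarefree N)
    (hω : N.primeFactors.card = 7)
    (hP : (∀ p ∈ N.primeFactors, 5 ≤ p) ∨ (∃ p ∈ N.primeFactors, 73 < p)) :
    10 / (3 * Real.pi) *
        ((∏ p ∈ N.primeFactors, (2 + (p : ℝ) ^ ((3 : ℝ) / 4)) / (1 + (p : ℝ))) +
          3 * ∏ p ∈ N.primeFactors, (2 + (p : ℝ) ^ ((1 : ℝ) / 2)) / (1 + (p : ℝ))) <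
      1 / 12 := by
  set S := N.primeFactors with hSdef
  have hlen : (S.sort (· ≤ ·)).length = 7 := by rw [Finset.length_sort]; exact hω
  obtain ⟨a, b, c, d, e, f, g, hl⟩ := list7 _ hlen
  have hsorted : List.Pairwise (· < ·) ([a, b, c, d, e, f, g] : List ℕ) := by
    rw [← hl]; exact (Finset.sortedLT_sort S).pairwise
  have htf : ([a, b, c, d, e, f, g] : List ℕ).toFinset = S := by
    rw [← hl]; exact Finset.sort_toFinset S _
  simp [List.pairwise_cons] at hsorted
  obtain ⟨⟨hab, -, -, -, -, -⟩, ⟨hbc, -, -, -, -⟩, ⟨hcd, -, -, -⟩, ⟨hde, -, -⟩,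
    ⟨hef, -⟩, hfg⟩ := hsorted
  have hSeq : S = ({a, b, c, d, e, f, g} : Finset ℕ) := by
    rw [← htf]; simp
  have hmemS : ∀ x ∈ ([a, b, c, d, e, f, g] : List ℕ), x ∈ S := fun x hx => by
    rw [← htf]; exact List.mem_toFinset.mpr hx
  have hpa : a.Prime := Nat.prime_of_mem_primeFactors (hmemS a (by simp))
  have hpb : b.Prime := Nat.prime_of_mem_primeFactors (hmemS b (by simp))
  have hpc : c.Prime := Nat.prime_of_mem_primeFactors (hmemS c (by simp))
  have hpd : d.Prime := Nat.prime_of_mem_primeFactors (hmemS d (by simp))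
  have hpe : e.Prime := Nat.prime_of_mem_primeFactors (hmemS e (by simp))
  have hpf : f.Prime := Nat.prime_of_mem_primeFactors (hmemS f (by simp))
  have hpg : g.Prime := Nat.prime_of_mem_primeFactors (hmemS g (by simp))
  have hpi : 10 / (3 * Real.pi) ≤ 1.062 := by
    have h := Real.pi_gt_d6
    rw [div_le_iff₀ (by positivity)]
    nlinarith
  rw [hSeq, prod_seven _ a b c d e f g hab hbc hcd hde hef hfg,
    prod_seven _ a b c d e f g hab hbc hcd hde hef hfg]
  rcases hP with hall | ⟨P, hPS, hP73⟩
  · -- all prime factors ≥ 5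
    have ha : 5 ≤ a := hall a (hmemS a (by simp))
    have hb : 7 ≤ b := prime_ge_7 hpb (by omega)
    have hc : 11 ≤ c := prime_ge_11 hpc (by omega)
    have hd : 13 ≤ d := prime_ge_13 hpd (by omega)
    have he : 17 ≤ e := prime_ge_17 hpe (by omega)
    have hf : 19 ≤ f := prime_ge_19 hpf (by omega)
    have hg : 23 ≤ g := prime_ge_23 hpg (by omega)
    apply lt_of_le_of_lt (b := (1.062 : ℝ) *
      ((0.892 * (0.789 * (0.671 * (0.633 * (0.577 * (0.556 * 0.5213)))))) +
        3 * (0.7062 * (0.5808 * (0.4432 * (0.4005 * (0.3403 * (0.3181 * 0.2833))))))))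
    · refine mul_le_mul hpi ?_ (by positivity) (by norm_num)
      gcongr
      · exact F_bound a 5 0.67 0.892 ha (by norm_num) (by norm_num) (by norm_num)
          (by norm_num) (by norm_num)
      · exact F_bound b 7 0.615 0.789 hb (by norm_num) (by norm_num) (by norm_num)
          (by norm_num) (by norm_num)
      · exact F_bound c 11 0.55 0.671 hc (by norm_num) (by norm_num) (by norm_num)
          (by norm_num) (by norm_num)
      · exact F_bound d 13 0.527 0.633 hd (by norm_num) (by norm_num) (by norm_num)
          (by norm_num) (by norm_num)
      · exact F_bound e 17 0.493 0.577 he (by norm_num) (by norm_num) (by norm_num)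
          (by norm_num) (by norm_num)
      · exact F_bound f 19 0.479 0.556 hf (by norm_num) (by norm_num) (by norm_num)
          (by norm_num) (by norm_num)
      · exact F_bound g 23 0.457 0.5213 hg (by norm_num) (by norm_num) (by norm_num)
          (by norm_num) (by norm_num)
      · exact G_bound a 5 0.4473 0.7062 ha (by norm_num) (by norm_num) (by norm_num)
          (by norm_num) (by norm_num)
      · exact G_bound b 7 0.378 0.5808 hb (by norm_num) (by norm_num) (by norm_num)
          (by norm_num) (by norm_num)
      · exact G_bound c 11 0.3016 0.4432 hc (by norm_num) (by norm_num) (by norm_num)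
          (by norm_num) (by norm_num)
      · exact G_bound d 13 0.2774 0.4005 hd (by norm_num) (by norm_num) (by norm_num)
          (by norm_num) (by norm_num)
      · exact G_bound e 17 0.2426 0.3403 he (by norm_num) (by norm_num) (by norm_num)
          (by norm_num) (by norm_num)
      · exact G_bound f 19 0.2295 0.3181 hf (by norm_num) (by norm_num) (by norm_num)
          (by norm_num) (by norm_num)
      · exact G_bound g 23 0.2086 0.2833 hg (by norm_num) (by norm_num) (by norm_num)
          (by norm_num) (by norm_num)
    · norm_num
  · -- there is a prime factor > 73
    have ha2 : a ≠ 2 := by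
      intro h
      have : (2 : ℕ) ∣ N := h ▸ Nat.dvd_of_mem_primeFactors (hmemS a (by simp))
      rw [Nat.odd_iff] at hodd
      omega
    have ha : 3 ≤ a := by have := hpa.two_le; omega
    have hb : 5 ≤ b := prime_ge_5 hpb (by omega)
    have hc : 7 ≤ c := prime_ge_7 hpc (by omega)
    have hd : 11 ≤ d := prime_ge_11 hpd (by omega)
    have he : 13 ≤ e := prime_ge_13 hpe (by omega)
    have hf : 17 ≤ f := prime_ge_17 hpf (by omega)
    have hg : 79 ≤ g := by
      have hPl : P ∈ ([a, b, c, d, e, f, g] : List ℕ) := by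
        rw [← List.mem_toFinset, htf]; exact hPS
      have hPg : P ≤ g := by
        simp [List.mem_cons] at hPl
        rcases hPl with rfl | rfl | rfl | rfl | rfl | rfl | rfl <;> omega
      exact prime_ge_79 hpg (by omega)
    apply lt_of_le_of_lt (b := (1.062 : ℝ) *
      ((1.071 * (0.892 * (0.789 * (0.671 * (0.633 * (0.577 * 0.3564)))))) +
        3 * (0.9331 * (0.7062 * (0.5808 * (0.4432 * (0.4005 * (0.3403 * 0.13611))))))))
    · refine mul_le_mul hpi ?_ (by positivity) (by norm_num)
      gcongr
      · exact F_bound a 3 0.76 1.071 ha (by norm_num) (by norm_num) (by norm_num)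
          (by norm_num) (by norm_num)
      · exact F_bound b 5 0.67 0.892 hb (by norm_num) (by norm_num) (by norm_num)
          (by norm_num) (by norm_num)
      · exact F_bound c 7 0.615 0.789 hc (by norm_num) (by norm_num) (by norm_num)
          (by norm_num) (by norm_num)
      · exact F_bound d 11 0.55 0.671 hd (by norm_num) (by norm_num) (by norm_num)
          (by norm_num) (by norm_num)
      · exact F_bound e 13 0.527 0.633 he (by norm_num) (by norm_num) (by norm_num)
          (by norm_num) (by norm_num)
      · exact F_bound f 17 0.493 0.577 hf (by norm_num) (by norm_num) (by norm_num)
          (by norm_num) (by norm_num)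
      · exact F_bound g 79 0.3355 0.3564 hg (by norm_num) (by norm_num) (by norm_num)
          (by norm_num) (by norm_num)
      · exact G_bound a 3 0.5774 0.9331 ha (by norm_num) (by norm_num) (by norm_num)
          (by norm_num) (by norm_num)
      · exact G_bound b 5 0.4473 0.7062 hb (by norm_num) (by norm_num) (by norm_num)
          (by norm_num) (by norm_num)
      · exact G_bound c 7 0.378 0.5808 hc (by norm_num) (by norm_num) (by norm_num)
          (by norm_num) (by norm_num)
      · exact G_bound d 11 0.3016 0.4432 hd (by norm_num) (by norm_num) (by norm_num)
          (by norm_num) (by norm_num)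
      · exact G_bound e 13 0.2774 0.4005 he (by norm_num) (by norm_num) (by norm_num)
          (by norm_num) (by norm_num)
      · exact G_bound f 17 0.2426 0.3403 hf (by norm_num) (by norm_num) (by norm_num)
          (by norm_num) (by norm_num)
      · exact G_bound g 79 0.11251 0.13611 hg (by norm_num) (by norm_num) (by norm_num)
          (by norm_num) (by norm_num)
    · norm_num
end

section
/- Let N be an odd squarefree integer with ω(N) = 4 such that the smallest prime factor of N is at least 23 or the largest prime factor of N is greater than 16573. Then (10/(3π)) · ( ∏_{p prime, p ∣ N} (2 + p^{3/4})/(1 + p) + 3 · ∏_{p prime, p ∣ N} (2 + p^{1/2})/(1 + p) ) < 1/12. -/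
open Finset

/-! ### Auxiliary rpow comparison lemmas -/

private lemma rpow34_le_s11 {x y : ℝ} (hx : 0 ≤ x) (hy : 0 ≤ y) (h : x ^ 3 ≤ y ^ 4) :
    x ^ ((3 : ℝ) / 4) ≤ y := by
  have h1 : x ^ ((3 : ℝ) / 4) = (x ^ (3 : ℕ)) ^ ((1 : ℝ) / 4) := by
    rw [← Real.rpow_natCast x 3, ← Real.rpow_mul hx]
    norm_num
  have h2 : y = (y ^ (4 : ℕ)) ^ ((1 : ℝ) / 4) := by
    rw [← Real.rpow_natCast y 4, ← Real.rpow_mul hy]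
    norm_num
  rw [h1, h2]
  exact Real.rpow_le_rpow (by positivity) h (by norm_num)

private lemma le_rpow14 {x y : ℝ} (hx : 0 ≤ x) (hy : 0 ≤ y) (h : y ^ 4 ≤ x) :
    y ≤ x ^ ((1 : ℝ) / 4) := by
  have h2 : y = (y ^ (4 : ℕ)) ^ ((1 : ℝ) / 4) := by
    rw [← Real.rpow_natCast y 4, ← Real.rpow_mul hy]
    norm_num
  rw [h2]
  exact Real.rpow_le_rpow (by positivity) h (by norm_num)

private lemma rpow12_le_s11 {x y : ℝ} (hx : 0 ≤ x) (hy : 0 ≤ y) (h : x ≤ y ^ 2) :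
    x ^ ((1 : ℝ) / 2) ≤ y := by
  have h2 : y = (y ^ (2 : ℕ)) ^ ((1 : ℝ) / 2) := by
    rw [← Real.rpow_natCast y 2, ← Real.rpow_mul hy]
    norm_num
  rw [h2]
  exact Real.rpow_le_rpow hx h (by norm_num)

private lemma le_rpow12 {x y : ℝ} (hx : 0 ≤ x) (hy : 0 ≤ y) (h : y ^ 2 ≤ x) :
    y ≤ x ^ ((1 : ℝ) / 2) := by
  have h2 : y = (y ^ (2 : ℕ)) ^ ((1 : ℝ) / 2) := by
    rw [← Real.rpow_natCast y 2, ← Real.rpow_mul hy]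
    norm_num
  rw [h2]
  exact Real.rpow_le_rpow (by positivity) h (by norm_num)

/-! ### Main bounding lemmas: the factor functions are bounded on `[a, ∞)` -/

/-- If `2 + a^(3/4) ≤ c (1+a)` and `3 ≤ 4 c a^(1/4)` then
`(2 + x^(3/4)) / (1 + x) ≤ c` for all `x ≥ a`. -/
private lemma bound34 {a c : ℝ} (ha : 0 < a) (hc : 0 < c)
    (H1 : 2 + a ^ ((3 : ℝ) / 4) ≤ c * (1 + a)) (H2 : 3 ≤ 4 * c * a ^ ((1 : ℝ) / 4))
    {x : ℝ} (hax : a ≤ x) : (2 + x ^ ((3 : ℝ) / 4)) / (1 + x) ≤ c := by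
  have hx : 0 < x := lt_of_lt_of_le ha hax
  rw [div_le_iff₀ (by linarith)]
  set A := a ^ ((1 : ℝ) / 4) with hA
  set B := a ^ ((3 : ℝ) / 4) with hB
  set X := x ^ ((3 : ℝ) / 4) with hX
  have hApos : 0 < A := Real.rpow_pos_of_pos ha _
  have hBpos : 0 < B := Real.rpow_pos_of_pos ha _
  have hXpos : 0 < X := Real.rpow_pos_of_pos hx _
  have hAB : A * B = a := by
    rw [hA, hB, ← Real.rpow_add ha]
    norm_num
  have hamgm : X * A ≤ 3 / 4 * x + 1 / 4 * a := by
    have := Real.geom_mean_le_arith_mean2_weighted (by norm_num : (0:ℝ) ≤ 3/4)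
      (by norm_num : (0:ℝ) ≤ 1/4) hx.le ha.le (by norm_num)
    simpa [hX, hA] using this
  -- Multiply the goal by A > 0 and combine linearly.
  have key : (2 + X) * A ≤ c * (1 + x) * A := by
    have e1 : (2 + B) * A ≤ c * (1 + a) * A :=
      mul_le_mul_of_nonneg_right H1 hApos.le
    have e2 : 3 * (x - a) ≤ 4 * c * A * (x - a) :=
      mul_le_mul_of_nonneg_right H2 (by linarith)
    nlinarith [hamgm, hAB, hApos, e1, e2]
  exact le_of_mul_le_mul_right key hApos

/-- If `2 + a^(1/2) ≤ c (1+a)` and `1 ≤ 2 c a^(1/2)` then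
`(2 + x^(1/2)) / (1 + x) ≤ c` for all `x ≥ a`. -/
private lemma bound12 {a c : ℝ} (ha : 0 < a) (hc : 0 < c)
    (H1 : 2 + a ^ ((1 : ℝ) / 2) ≤ c * (1 + a)) (H2 : 1 ≤ 2 * c * a ^ ((1 : ℝ) / 2))
    {x : ℝ} (hax : a ≤ x) : (2 + x ^ ((1 : ℝ) / 2)) / (1 + x) ≤ c := by
  have hx : 0 < x := lt_of_lt_of_le ha hax
  rw [div_le_iff₀ (by linarith)]
  set A := a ^ ((1 : ℝ) / 2) with hA
  set X := x ^ ((1 : ℝ) / 2) with hX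
  have hApos : 0 < A := Real.rpow_pos_of_pos ha _
  have hXpos : 0 < X := Real.rpow_pos_of_pos hx _
  have hAA : A * A = a := by
    rw [hA, ← Real.rpow_add ha]
    norm_num
  have hamgm : X * A ≤ 1 / 2 * x + 1 / 2 * a := by
    have := Real.geom_mean_le_arith_mean2_weighted (by norm_num : (0:ℝ) ≤ 1/2)
      (by norm_num : (0:ℝ) ≤ 1/2) hx.le ha.le (by norm_num)
    simpa [hX, hA] using this
  have key : (2 + X) * A ≤ c * (1 + x) * A := by
    have e1 : (2 + A) * A ≤ c * (1 + a) * A :=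
      mul_le_mul_of_nonneg_right H1 hApos.le
    have e2 : 1 * (x - a) ≤ 2 * c * A * (x - a) :=
      mul_le_mul_of_nonneg_right H2 (by linarith)
    nlinarith [hamgm, hAA, hApos, e1, e2]
  exact le_of_mul_le_mul_right key hApos

/-- Concrete instance of `bound34` where the hypotheses are rational checks. -/
private lemma bound34' (a c : ℝ) (ha : 0 < a) (hc : 0 < c)
    (h1 : 0 ≤ c * (1 + a) - 2) (h2 : a ^ 3 ≤ (c * (1 + a) - 2) ^ 4)
    (h3 : 81 ≤ 256 * c ^ 4 * a)
    {x : ℝ} (hax : a ≤ x) : (2 + x ^ ((3 : ℝ) / 4)) / (1 + x) ≤ c := by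
  refine bound34 ha hc ?_ ?_ hax
  · have := rpow34_le_s11 ha.le h1 h2
    linarith
  · have h4 : (3 / (4 * c)) ^ 4 ≤ a := by
      rw [div_pow]
      rw [div_le_iff₀ (by positivity)]
      nlinarith
    have := le_rpow14 ha.le (by positivity : (0:ℝ) ≤ 3 / (4 * c)) h4
    rw [div_le_iff₀ (by positivity)] at this
    linarith [this]

/-- Concrete instance of `bound12` where the hypotheses are rational checks. -/
private lemma bound12' (a c : ℝ) (ha : 0 < a) (hc : 0 < c)
    (h1 : 0 ≤ c * (1 + a) - 2) (h2 : a ≤ (c * (1 + a) - 2) ^ 2)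
    (h3 : 1 ≤ 4 * c ^ 2 * a)
    {x : ℝ} (hax : a ≤ x) : (2 + x ^ ((1 : ℝ) / 2)) / (1 + x) ≤ c := by
  refine bound12 ha hc ?_ ?_ hax
  · have := rpow12_le_s11 ha.le h1 h2
    linarith
  · have h4 : (1 / (2 * c)) ^ 2 ≤ a := by
      rw [div_pow]
      rw [div_le_iff₀ (by positivity)]
      nlinarith
    have := le_rpow12 ha.le (by positivity : (0:ℝ) ≤ 1 / (2 * c)) h4
    rw [div_le_iff₀ (by positivity)] at this
    linarith [this]

/-- Extract the four elements of a 4-element finset of naturals in increasing order,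
together with a product formula. -/
private lemma exists_sorted4 (s : Finset ℕ) (h : s.card = 4) :
    ∃ a b c d : ℕ, a ∈ s ∧ b ∈ s ∧ c ∈ s ∧ d ∈ s ∧ a < b ∧ b < c ∧ c < d ∧
      ∀ f : ℕ → ℝ, ∏ p ∈ s, f p = f a * f b * f c * f d := by
  have hlen : (s.sort (· ≤ ·)).length = 4 := by rw [Finset.length_sort, h]
  have hsorted : List.Pairwise (· < ·) (s.sort (· ≤ ·)) := (Finset.sortedLT_sort s).pairwise
  have hfs : (s.sort (· ≤ ·)).toFinset = s := Finset.sort_toFinset s _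
  rcases hl : s.sort (· ≤ ·) with _ | ⟨a, _ | ⟨b, _ | ⟨c, _ | ⟨d, _ | ⟨e, l⟩⟩⟩⟩⟩ <;>
    rw [hl] at hlen <;> simp_all
  obtain ⟨⟨hab, -, -⟩, ⟨hbc, -⟩, hcd⟩ := hsorted
  have hset : s = insert a (insert b (insert c ({d} : Finset ℕ))) := hfs.symm
  refine ⟨a, ?_, b, ?_, c, ?_, d, ?_, hab, hbc, hcd, ?_⟩
  · rw [hset]; simp
  · rw [hset]; simp
  · rw [hset]; simp
  · rw [hset]; simp
  · intro f
    rw [hset]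
    rw [Finset.prod_insert (by simp; omega), Finset.prod_insert (by simp; omega),
      Finset.prod_insert (by simp; omega), Finset.prod_singleton]
    ring

/-- Extract the three elements of a 3-element finset of naturals in increasing order,
together with a product formula. -/
private lemma exists_sorted3 (s : Finset ℕ) (h : s.card = 3) :
    ∃ a b c : ℕ, a ∈ s ∧ b ∈ s ∧ c ∈ s ∧ a < b ∧ b < c ∧
      ∀ f : ℕ → ℝ, ∏ p ∈ s, f p = f a * f b * f c := by
  have hlen : (s.sort (· ≤ ·)).length = 3 := by rw [Finset.length_sort, h]
  have hsorted : List.Pairwise (· < ·) (s.sort (· ≤ ·)) := (Finset.sortedLT_sort s).pairwise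
  have hfs : (s.sort (· ≤ ·)).toFinset = s := Finset.sort_toFinset s _
  rcases hl : s.sort (· ≤ ·) with _ | ⟨a, _ | ⟨b, _ | ⟨c, _ | ⟨d, l⟩⟩⟩⟩ <;>
    rw [hl] at hlen <;> simp_all
  obtain ⟨⟨hab, -⟩, hbc⟩ := hsorted
  have hset : s = insert a (insert b ({c} : Finset ℕ)) := hfs.symm
  refine ⟨a, ?_, b, ?_, c, ?_, hab, hbc, ?_⟩
  · rw [hset]; simp
  · rw [hset]; simp
  · rw [hset]; simp
  · intro f
    rw [hset]
    rw [Finset.prod_insert (by simp; omega), Finset.prod_insert (by simp; omega),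
      Finset.prod_singleton]
    ring

/-- For an odd squarefree integer `N` with exactly `4` distinct prime factors whose smallest
prime factor is at least `23` or whose largest prime factor is greater than `16573`, the key
inequality holds. -/
theorem key_inequality_omega_eq_4 (N : ℕ) (hodd : Odd N) (hsf : Squarefree N)
    (hω : N.primeFactors.card = 4)
    (hP : (∀ p ∈ N.primeFactors, 23 ≤ p) ∨ (∃ p ∈ N.primeFactors, 16573 < p)) :
    10 / (3 * Real.pi) *
        ((∏ p ∈ N.primeFactors, (2 + (p : ℝ) ^ ((3 : ℝ) / 4)) / (1 + (p : ℝ))) +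
          3 * ∏ p ∈ N.primeFactors, (2 + (p : ℝ) ^ ((1 : ℝ) / 2)) / (1 + (p : ℝ))) <
      1 / 12 := by
  -- every prime factor of N is odd
  have hoddp : ∀ p ∈ N.primeFactors, Odd p := by
    intro p hp
    rcases Nat.even_or_odd p with he | ho
    · exfalso
      have hpd : p ∣ N := Nat.dvd_of_mem_primeFactors hp
      have h2 : 2 ∣ N := dvd_trans he.two_dvd hpd
      exact (Nat.not_even_iff_odd.mpr hodd) (even_iff_two_dvd.mpr h2)
    · exact ho
  set F : ℕ → ℝ := fun p => (2 + (p : ℝ) ^ ((3 : ℝ) / 4)) / (1 + (p : ℝ)) with hF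
  set G : ℕ → ℝ := fun p => (2 + (p : ℝ) ^ ((1 : ℝ) / 2)) / (1 + (p : ℝ)) with hG
  have hFnonneg : ∀ p : ℕ, 0 ≤ F p := by
    intro p; apply div_nonneg
    · positivity
    · positivity
  have hGnonneg : ∀ p : ℕ, 0 ≤ G p := by
    intro p; apply div_nonneg
    · positivity
    · positivity
  -- the main bound: the bracket is less than 0.0785398/1 in either case
  have key : (∏ p ∈ N.primeFactors, F p) + 3 * ∏ p ∈ N.primeFactors, G p
      < 3 * 3.141592 / 120 := by
    rcases hP with h23 | ⟨q, hq, hq16573⟩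
    · -- Case 1: all prime factors are at least 23
      obtain ⟨a, b, c, d, has, hbs, hcs, hds, hab, hbc, hcd, hprod⟩ :=
        exists_sorted4 N.primeFactors hω
      have ha23 : 23 ≤ a := h23 a has
      obtain ⟨ka, hka⟩ := hoddp a has
      obtain ⟨kb, hkb⟩ := hoddp b hbs
      obtain ⟨kc, hkc⟩ := hoddp c hcs
      obtain ⟨kd, hkd⟩ := hoddp d hds
      have hb25 : 25 ≤ b := by omega
      have hc27 : 27 ≤ c := by omega
      have hd29 : 29 ≤ d := by omega
      have haR : (23 : ℝ) ≤ (a : ℝ) := by exact_mod_cast ha23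
      have hbR : (25 : ℝ) ≤ (b : ℝ) := by exact_mod_cast hb25
      have hcR : (27 : ℝ) ≤ (c : ℝ) := by exact_mod_cast hc27
      have hdR : (29 : ℝ) ≤ (d : ℝ) := by exact_mod_cast hd29
      have fa : F a ≤ 0.52095 := bound34' 23 0.52095 (by norm_num) (by norm_num)
        (by norm_num) (by norm_num) (by norm_num) haR
      have fb : F b ≤ 0.50694 := bound34' 25 0.50694 (by norm_num) (by norm_num)
        (by norm_num) (by norm_num) (by norm_num) hbR
      have fc : F c ≤ 0.49446 := bound34' 27 0.49446 (by norm_num) (by norm_num)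
        (by norm_num) (by norm_num) (by norm_num) hcR
      have fd : F d ≤ 0.48323 := bound34' 29 0.48323 (by norm_num) (by norm_num)
        (by norm_num) (by norm_num) (by norm_num) hdR
      have ga : G a ≤ 0.28316 := bound12' 23 0.28316 (by norm_num) (by norm_num)
        (by norm_num) (by norm_num) (by norm_num) haR
      have gb : G b ≤ 0.26924 := bound12' 25 0.26924 (by norm_num) (by norm_num)
        (by norm_num) (by norm_num) (by norm_num) hbR
      have gc : G c ≤ 0.25701 := bound12' 27 0.25701 (by norm_num) (by norm_num)
        (by norm_num) (by norm_num) (by norm_num) hcR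
      have gd : G d ≤ 0.24618 := bound12' 29 0.24618 (by norm_num) (by norm_num)
        (by norm_num) (by norm_num) (by norm_num) hdR
      rw [hprod F, hprod G]
      have hFle : F a * F b * F c * F d ≤ 0.52095 * 0.50694 * 0.49446 * 0.48323 := by
        have h1 : F a * F b ≤ 0.52095 * 0.50694 :=
          mul_le_mul fa fb (hFnonneg b) (by norm_num)
        have h2 : F a * F b * F c ≤ 0.52095 * 0.50694 * 0.49446 :=
          mul_le_mul h1 fc (hFnonneg c) (by norm_num)
        exact mul_le_mul h2 fd (hFnonneg d) (by norm_num)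
      have hGle : G a * G b * G c * G d ≤ 0.28316 * 0.26924 * 0.25701 * 0.24618 := by
        have h1 : G a * G b ≤ 0.28316 * 0.26924 :=
          mul_le_mul ga gb (hGnonneg b) (by norm_num)
        have h2 : G a * G b * G c ≤ 0.28316 * 0.26924 * 0.25701 :=
          mul_le_mul h1 gc (hGnonneg c) (by norm_num)
        exact mul_le_mul h2 gd (hGnonneg d) (by norm_num)
      nlinarith [hFle, hGle]
    · -- Case 2: some prime factor exceeds 16573
      have hqmem := hq
      have hcard3 : (N.primeFactors.erase q).card = 3 := by
        rw [Finset.card_erase_of_mem hq, hω]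
      obtain ⟨a, b, c, has, hbs, hcs, hab, hbc, hprod⟩ :=
        exists_sorted3 (N.primeFactors.erase q) hcard3
      have has' : a ∈ N.primeFactors := Finset.mem_of_mem_erase has
      have hbs' : b ∈ N.primeFactors := Finset.mem_of_mem_erase hbs
      have hcs' : c ∈ N.primeFactors := Finset.mem_of_mem_erase hcs
      have hprodF : ∏ p ∈ N.primeFactors, F p = F q * (F a * F b * F c) := by
        rw [← Finset.mul_prod_erase _ _ hq, hprod F]
      have hprodG : ∏ p ∈ N.primeFactors, G p = G q * (G a * G b * G c) := by
        rw [← Finset.mul_prod_erase _ _ hq, hprod G]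
      -- a, b, c are distinct odd primes, so a ≥ 3, b ≥ 5, c ≥ 7
      have hap : a.Prime := Nat.prime_of_mem_primeFactors has'
      obtain ⟨ka, hka⟩ := hoddp a has'
      obtain ⟨kb, hkb⟩ := hoddp b hbs'
      obtain ⟨kc, hkc⟩ := hoddp c hcs'
      have ha3 : 3 ≤ a := by
        have := hap.two_le; omega
      have hb5 : 5 ≤ b := by omega
      have hc7 : 7 ≤ c := by omega
      have hq' : 16574 ≤ q := hq16573
      have haR : (3 : ℝ) ≤ (a : ℝ) := by exact_mod_cast ha3
      have hbR : (5 : ℝ) ≤ (b : ℝ) := by exact_mod_cast hb5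
      have hcR : (7 : ℝ) ≤ (c : ℝ) := by exact_mod_cast hc7
      have hqR : (16574 : ℝ) ≤ (q : ℝ) := by exact_mod_cast hq'
      have fa : F a ≤ 1.06988 := bound34' 3 1.06988 (by norm_num) (by norm_num)
        (by norm_num) (by norm_num) (by norm_num) haR
      have fb : F b ≤ 0.89062 := bound34' 5 0.89062 (by norm_num) (by norm_num)
        (by norm_num) (by norm_num) (by norm_num) hbR
      have fc : F c ≤ 0.78795 := bound34' 7 0.78795 (by norm_num) (by norm_num)
        (by norm_num) (by norm_num) (by norm_num) hcR
      have fq : F q ≤ 0.08825 := bound34' 16574 0.08825 (by norm_num) (by norm_num)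
        (by norm_num) (by norm_num) (by norm_num) hqR
      have ga : G a ≤ 0.93302 := bound12' 3 0.93302 (by norm_num) (by norm_num)
        (by norm_num) (by norm_num) (by norm_num) haR
      have gb : G b ≤ 0.70602 := bound12' 5 0.70602 (by norm_num) (by norm_num)
        (by norm_num) (by norm_num) (by norm_num) hbR
      have gc : G c ≤ 0.58072 := bound12' 7 0.58072 (by norm_num) (by norm_num)
        (by norm_num) (by norm_num) (by norm_num) hcR
      have gq : G q ≤ 0.0078878 := bound12' 16574 0.0078878 (by norm_num) (by norm_num)
        (by norm_num) (by norm_num) (by norm_num) hqR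
      rw [hprodF, hprodG]
      have hFle : F q * (F a * F b * F c) ≤ 0.08825 * (1.06988 * 0.89062 * 0.78795) := by
        have h1 : F a * F b ≤ 1.06988 * 0.89062 :=
          mul_le_mul fa fb (hFnonneg b) (by norm_num)
        have h2 : F a * F b * F c ≤ 1.06988 * 0.89062 * 0.78795 :=
          mul_le_mul h1 fc (hFnonneg c) (by norm_num)
        exact mul_le_mul fq h2 (by positivity) (by norm_num)
      have hGle : G q * (G a * G b * G c) ≤ 0.0078878 * (0.93302 * 0.70602 * 0.58072) := by
        have h1 : G a * G b ≤ 0.93302 * 0.70602 :=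
          mul_le_mul ga gb (hGnonneg b) (by norm_num)
        have h2 : G a * G b * G c ≤ 0.93302 * 0.70602 * 0.58072 :=
          mul_le_mul h1 gc (hGnonneg c) (by norm_num)
        exact mul_le_mul gq h2 (by positivity) (by norm_num)
      nlinarith [hFle, hGle]
  -- Conclude using π > 3.141592
  have hpi : (3.141592 : ℝ) < Real.pi := Real.pi_gt_d6
  have hpipos : (0 : ℝ) < Real.pi := Real.pi_pos
  have hbpos : 0 ≤ (∏ p ∈ N.primeFactors, F p) + 3 * ∏ p ∈ N.primeFactors, G p := by
    have h1 : 0 ≤ ∏ p ∈ N.primeFactors, F p := Finset.prod_nonneg fun p _ => hFnonneg p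
    have h2 : 0 ≤ ∏ p ∈ N.primeFactors, G p := Finset.prod_nonneg fun p _ => hGnonneg p
    linarith
  rw [div_mul_eq_mul_div, div_lt_div_iff₀ (by positivity) (by norm_num)]
  calc 10 * ((∏ p ∈ N.primeFactors, F p) + 3 * ∏ p ∈ N.primeFactors, G p) * 12
      = 120 * ((∏ p ∈ N.primeFactors, F p) + 3 * ∏ p ∈ N.primeFactors, G p) := by ring
    _ < 120 * (3 * 3.141592 / 120) := by
        apply mul_lt_mul_of_pos_left key (by norm_num)
    _ = 3 * 3.141592 := by ring
    _ < 1 * (3 * Real.pi) := by nlinarith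
end
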